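/- For the matrix M(λ,J) = M_1 obtained from the recursive construction M_a = Φ_1(Ω_{J^a}(M_{a+1})), the CTM energy E_CTM(M) := sum of the top-row entries of M equals the rigged-configuration energy E_RC(λ,J) := ∑_{i,j} min(i,j) m_i m_j + ∑_i ∑_{j=1}^{m_i} J^i_j. -/

import Mathlib

/-!
A matrix in `H_n` (a 2×n integer matrix whose entries read column by column, top then
bottom, are weakly increasing) is recorded by its reading sequence
`α_1 ≤ α_2 ≤ ⋯ ≤ α_{2n}`, as a sorted list of integers.
-/

/-- `Φ_1` adds `(1,3,…,2n−1)` to the top row and `(2,4,…,2n)` to the bottom row,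
i.e. it adds `k` to the `k`-th entry (1-based) of the reading sequence. -/
def Phi1 (l : List ℤ) : List ℤ := l.mapIdx (fun i a => a + (i : ℤ) + 1)

/-- `Ω_X` inserts two copies of each element of the finite multiset `X` (recorded as a
list) into the sorted reading sequence. -/
def OmegaL (X : List ℤ) (l : List ℤ) : List ℤ :=
  X.foldr (fun x m => List.orderedInsert (· ≤ ·) x (List.orderedInsert (· ≤ ·) x m)) l

/-- The recursive construction: `Mrec J h k` is the matrix `M_{h+1-k}`, where
`M_{h+1}` is the empty matrix and `M_a = Φ_1(Ω_{J^a}(M_{a+1}))`. -/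
def Mrec (J : ℕ → List ℤ) (h : ℕ) : ℕ → List ℤ
  | 0 => []
  | k + 1 => Phi1 (OmegaL (J (h - k)) (Mrec J h k))

/-- The CTM energy: the sum of the top-row entries, i.e. of the entries in odd (1-based)
positions `β_1, β_3, …` of the reading sequence. -/
def ectm : List ℤ → ℤ
  | a :: _ :: t => a + ectm t
  | [a] => a
  | [] => 0

def ebot : List ℤ → ℤ
  | [] => 0
  | _ :: t => ectm t

lemma ectm_cons (a : ℤ) (t : List ℤ) : ectm (a :: t) = a + ebot t := by
  cases t <;> simp [ectm, ebot]

lemma pair_insert (x : ℤ) (l : List ℤ) :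
    ectm (List.orderedInsert (· ≤ ·) x (List.orderedInsert (· ≤ ·) x l)) = x + ectm l ∧
    ebot (List.orderedInsert (· ≤ ·) x (List.orderedInsert (· ≤ ·) x l)) = x + ebot l := by
  induction l with
  | nil => simp [List.orderedInsert, ectm, ebot]
  | cons a t ih =>
    by_cases hxa : x ≤ a
    · simp [List.orderedInsert, hxa, ectm, ebot]
    · simp only [List.orderedInsert, if_neg hxa]
      refine ⟨?_, ?_⟩
      · rw [ectm_cons, ectm_cons, ih.2]; ring
      · simp only [ebot, ih.1]

lemma ectm_OmegaL (X l : List ℤ) : ectm (OmegaL X l) = X.sum + ectm l := by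
  induction X with
  | nil => simp [OmegaL]
  | cons x t ih =>
    simp only [OmegaL, List.foldr_cons, List.sum_cons] at *
    rw [(pair_insert x _).1, ih]; ring

lemma length_orderedInsert' (x : ℤ) (l : List ℤ) :
    (List.orderedInsert (· ≤ ·) x l).length = l.length + 1 := by
  simpa using List.orderedInsert_length (· ≤ ·) l x

lemma length_OmegaL (X l : List ℤ) : (OmegaL X l).length = 2 * X.length + l.length := by
  induction X with
  | nil => simp [OmegaL]
  | cons x t ih =>
    simp only [OmegaL, List.foldr_cons, List.length_cons] at *
    rw [length_orderedInsert', length_orderedInsert', ih]; ring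


def addIdx (c : ℤ) : List ℤ → List ℤ
  | [] => []
  | a :: t => (a + c) :: addIdx (c + 1) t

lemma mapIdx_eq_addIdx : ∀ (l : List ℤ) (c : ℤ),
    (l.mapIdx fun i a => a + (i : ℤ) + c) = addIdx c l := by
  intro l
  induction l with
  | nil => intro c; simp [addIdx]
  | cons a t ih =>
    intro c
    rw [List.mapIdx_cons]
    have h1 : (fun (i : ℕ) => (fun (i : ℕ) (a : ℤ) => a + (i : ℤ) + c) (i + 1))
        = fun (i : ℕ) (a : ℤ) => a + (i : ℤ) + (c + 1) := by
      funext i a; push_cast; ring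
    rw [h1, ih (c + 1)]
    simp [addIdx]

lemma ectm_addIdx : ∀ (n : ℕ) (c : ℤ) (l : List ℤ), l.length = 2 * n →
    ectm (addIdx c l) = ectm l + n * c + n * (n - 1) := by
  intro n
  induction n with
  | zero =>
    intro c l hl
    have : l = [] := by cases l <;> simp_all
    subst this; simp [addIdx, ectm]
  | succ n ih =>
    intro c l hl
    match l with
    | [] => simp at hl
    | [a] => simp at hl; omega
    | a :: b :: t =>
      have ht : t.length = 2 * n := by simp at hl; omega
      simp only [addIdx, ectm]
      rw [ih (c + 1 + 1) t ht]
      push_cast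
      ring

lemma ectm_Phi1 (n : ℕ) (l : List ℤ) (hl : l.length = 2 * n) :
    ectm (Phi1 l) = ectm l + (n : ℤ) ^ 2 := by
  rw [Phi1, mapIdx_eq_addIdx, ectm_addIdx n 1 l hl]; ring

lemma length_Phi1 (l : List ℤ) : (Phi1 l).length = l.length := by
  simp [Phi1]

lemma length_Mrec (J : ℕ → List ℤ) (h : ℕ) : ∀ k,
    (Mrec J h k).length = 2 * ∑ j ∈ Finset.range k, (J (h - j)).length := by
  intro k
  induction k with
  | zero => simp [Mrec]
  | succ k ih =>
    rw [Mrec, length_Phi1, length_OmegaL, ih, Finset.sum_range_succ]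
    ring

lemma ectm_Mrec (J : ℕ → List ℤ) (h : ℕ) : ∀ k,
    ectm (Mrec J h k)
      = ∑ j ∈ Finset.range k,
          ((∑ i ∈ Finset.range (j + 1), ((J (h - i)).length : ℤ)) ^ 2)
        + ∑ j ∈ Finset.range k, (J (h - j)).sum := by
  intro k
  induction k with
  | zero => simp [Mrec, ectm]
  | succ k ih =>
    have hlen : (OmegaL (J (h - k)) (Mrec J h k)).length
        = 2 * ∑ j ∈ Finset.range (k + 1), (J (h - j)).length := by
      rw [length_OmegaL, length_Mrec, Finset.sum_range_succ]; ring
    rw [Mrec, ectm_Phi1 _ _ hlen, ectm_OmegaL, ih,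
      Finset.sum_range_succ ((fun j => ((∑ i ∈ Finset.range (j + 1), ((J (h - i)).length : ℤ)) ^ 2))) k,
      Finset.sum_range_succ (fun j => (J (h - j)).sum) k]
    push_cast
    ring

lemma Tj_eq (h : ℕ) (m : ℕ → ℕ) (j : ℕ) (hj : j < h) :
    (∑ i ∈ Finset.range (j + 1), ((m (h - i)) : ℤ))
      = ∑ a ∈ Finset.Icc 1 h, (if h - j ≤ a then ((m a) : ℤ) else 0) := by
  rw [← Finset.sum_filter]
  have hf : (Finset.Icc 1 h).filter (fun a => h - j ≤ a) = Finset.Icc (h - j) h := by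
    ext a; simp only [Finset.mem_filter, Finset.mem_Icc]; omega
  rw [hf]
  refine Finset.sum_nbij' (fun i => h - i) (fun a => h - a) ?_ ?_ ?_ ?_ (fun a ha => rfl)
  · intro a ha; simp only [Finset.mem_range, Finset.mem_Icc] at *; omega
  · intro a ha; simp only [Finset.mem_range, Finset.mem_Icc] at *; omega
  · intro a ha; simp only [Finset.mem_range, Finset.mem_Icc] at *; omega
  · intro a ha; simp only [Finset.mem_range, Finset.mem_Icc] at *; omega

lemma count_min (h a b : ℕ) (ha : a ∈ Finset.Icc 1 h) (hb : b ∈ Finset.Icc 1 h) :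
    (∑ j ∈ Finset.range h, if h - j ≤ a ∧ h - j ≤ b then (1 : ℤ) else 0)
      = ((min a b : ℕ) : ℤ) := by
  simp only [Finset.mem_Icc] at ha hb
  have hf : (Finset.range h).filter (fun j => h - j ≤ a ∧ h - j ≤ b)
      = Finset.Ico (h - min a b) h := by
    ext j; simp only [Finset.mem_filter, Finset.mem_range, Finset.mem_Ico]; omega
  rw [Finset.sum_boole, hf, Nat.card_Ico]
  have : h - (h - min a b) = min a b := by omega
  rw [this]

lemma squares_to_min (h : ℕ) (m : ℕ → ℕ) :
    ∑ j ∈ Finset.range h, (∑ i ∈ Finset.range (j + 1), ((m (h - i)) : ℤ)) ^ 2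
      = ∑ a ∈ Finset.Icc 1 h, ∑ b ∈ Finset.Icc 1 h,
          ((min a b : ℕ) : ℤ) * (m a : ℤ) * (m b : ℤ) := by
  rw [Finset.sum_congr rfl (fun j hj => by
    rw [Tj_eq h m j (Finset.mem_range.mp hj), sq, Finset.sum_mul_sum])]
  rw [Finset.sum_comm]
  refine Finset.sum_congr rfl fun a ha => ?_
  rw [Finset.sum_comm]
  refine Finset.sum_congr rfl fun b hb => ?_
  have : ∀ j, (if h - j ≤ a then ((m a) : ℤ) else 0) * (if h - j ≤ b then ((m b) : ℤ) else 0)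
      = (m a : ℤ) * (m b : ℤ) * (if h - j ≤ a ∧ h - j ≤ b then (1 : ℤ) else 0) := by
    intro j; by_cases h1 : h - j ≤ a <;> by_cases h2 : h - j ≤ b <;> simp [h1, h2]
  simp only [this, ← Finset.mul_sum, count_min h a b ha hb]
  ring

lemma riggings_reindex (h : ℕ) (J : ℕ → List ℤ) :
    ∑ j ∈ Finset.range h, (J (h - j)).sum = ∑ i ∈ Finset.Icc 1 h, (J i).sum := by
  refine Finset.sum_nbij' (fun j => h - j) (fun i => h - i) ?_ ?_ ?_ ?_ (fun a ha => rfl)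
  · intro a ha; simp only [Finset.mem_range, Finset.mem_Icc] at *; omega
  · intro a ha; simp only [Finset.mem_range, Finset.mem_Icc] at *; omega
  · intro a ha; simp only [Finset.mem_range, Finset.mem_Icc] at *; omega
  · intro a ha; simp only [Finset.mem_range, Finset.mem_Icc] at *; omega

/-- Energy preservation: for `M(λ,J) = M_1`, the CTM energy (sum of top-row entries)
equals the rigged-configuration energy
`E_RC(λ,J) = ∑_{i,j} min(i,j) m_i m_j + ∑_i ∑_{j=1}^{m_i} J^i_j`. -/
theorem energy_Mrec (h : ℕ) (m : ℕ → ℕ) (J : ℕ → List ℤ)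
    (hlen : ∀ i, (J i).length = m i) (hsort : ∀ i, (J i).Pairwise (· ≤ ·)) :
    ectm (Mrec J h h)
      = (∑ i ∈ Finset.Icc 1 h, ∑ j ∈ Finset.Icc 1 h,
          ((min i j : ℕ) : ℤ) * (m i : ℤ) * (m j : ℤ))
        + ∑ i ∈ Finset.Icc 1 h, (J i).sum := by
  rw [ectm_Mrec J h h]
  simp only [hlen]
  rw [squares_to_min h m, riggings_reindex h J]
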